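/- arXiv:2107.04660 — 3 statements merged into one kernel-verified Lean document; each statement's English description precedes it below -/
import Mathlib

section
/- Let Σ be a finite alphabet of size σ ≥ 2, f : Σ → {0,…,σ−1} injective, and let S ≠ S' be two distinct strings over Σ of the same length n. Then for every natural number M ≥ 2, the number of distinct primes q with q > M and f(S) ≡ f(S') (mod q) is at most Nat.log M (σ^n), i.e., at most the floor of the base-M logarithm of σ^n. -/
/-- The value realization (hash value) of a string `S` over an alphabet with
character values given by `f`, in base `σ`:
`f(S) = ∑_{i=1}^{n} σ^(i-1) · f(S[i])`. -/
def valueRealization {α : Type*} (σ : ℕ) (f : α → ℕ) : List α → ℕ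
  | [] => 0
  | c :: rest => f c + σ * valueRealization σ f rest

lemma valueRealization_lt {α : Type*} (σ : ℕ) (hσ : 1 ≤ σ) (f : α → ℕ)
    (hfσ : ∀ a : α, f a < σ) : ∀ S : List α, valueRealization σ f S < σ ^ S.length
  | [] => by simp [valueRealization]
  | c :: rest => by
    have h1 := valueRealization_lt σ hσ f hfσ rest
    have h2 := hfσ c
    have : σ * (valueRealization σ f rest + 1) ≤ σ * σ ^ rest.length :=
      Nat.mul_le_mul_left σ h1
    simp only [valueRealization, List.length_cons, pow_succ]
    nlinarith

lemma valueRealization_inj {α : Type*} (σ : ℕ) (hσ : 1 ≤ σ) (f : α → ℕ)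
    (hf : Function.Injective f) (hfσ : ∀ a : α, f a < σ) :
    ∀ S S' : List α, S.length = S'.length →
      valueRealization σ f S = valueRealization σ f S' → S = S'
  | [], [], _, _ => rfl
  | a :: s, b :: s', hlen, hval => by
    simp only [valueRealization] at hval
    have hmod : f a = f b := by
      have := congrArg (· % σ) hval
      simpa [Nat.add_mul_mod_self_left, Nat.mod_eq_of_lt (hfσ a),
        Nat.mod_eq_of_lt (hfσ b)] using this
    have hab : a = b := hf hmod
    have hrest : valueRealization σ f s = valueRealization σ f s' := by
      have : σ * valueRealization σ f s = σ * valueRealization σ f s' := by omega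
      exact Nat.eq_of_mul_eq_mul_left (by omega) this
    have := valueRealization_inj σ hσ f hf hfσ s s' (by simpa using hlen) hrest
    rw [hab, this]

/-- For two distinct strings `S ≠ S'` of the same length `n`, the number of
distinct primes `q > M` with `f(S) ≡ f(S') (mod q)` is at most
`Nat.log M (σ^n)`. -/
theorem card_primes_hash_collision_le
    {α : Type*} [Fintype α] (σ : ℕ) (hσ : 2 ≤ σ) (hcard : Fintype.card α = σ)
    (f : α → ℕ) (hf : Function.Injective f) (hfσ : ∀ a : α, f a < σ)
    (n : ℕ) (S S' : List α) (hS : S.length = n) (hS' : S'.length = n)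
    (hne : S ≠ S') (M : ℕ) (hM : 2 ≤ M) :
    {q : ℕ | q.Prime ∧ M < q ∧
        valueRealization σ f S ≡ valueRealization σ f S' [MOD q]}.ncard
      ≤ Nat.log M (σ ^ n) := by
  set a := valueRealization σ f S with ha
  set b := valueRealization σ f S' with hb
  have hσ1 : 1 ≤ σ := by omega
  have hab : a ≠ b := fun h =>
    hne (valueRealization_inj σ hσ1 f hf hfσ S S' (hS.trans hS'.symm) h)
  set D : ℕ := ((b : ℤ) - a).natAbs with hD
  have hD0 : D ≠ 0 := by
    simp only [hD, Int.natAbs_ne_zero, sub_ne_zero]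
    exact_mod_cast fun h => hab (by exact_mod_cast h.symm)
  have hDlt : D < σ ^ n := by
    have h1 : a < σ ^ n := hS ▸ valueRealization_lt σ hσ1 f hfσ S
    have h2 : b < σ ^ n := hS' ▸ valueRealization_lt σ hσ1 f hfσ S'
    simp only [hD]
    omega
  have hdvd : ∀ q : ℕ, a ≡ b [MOD q] → q ∣ D := by
    intro q hq
    have := (Nat.modEq_iff_dvd).mp hq
    exact Int.natAbs_dvd_natAbs.mpr (by simpa using this)
  set t : Finset ℕ := D.divisors.filter (fun q => q.Prime ∧ M < q ∧ a ≡ b [MOD q])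
    with ht
  have hset : {q : ℕ | q.Prime ∧ M < q ∧ a ≡ b [MOD q]} = ↑t := by
    ext q
    simp only [ht, Set.mem_setOf_eq, Finset.coe_filter, Nat.mem_divisors,
      Set.mem_setOf_eq]
    constructor
    · rintro ⟨h1, h2, h3⟩; exact ⟨⟨hdvd q h3, hD0⟩, h1, h2, h3⟩
    · rintro ⟨_, h⟩; exact h
  rw [hset, Set.ncard_coe_finset]
  have hprod_dvd : (∏ q ∈ t, q) ∣ D := by
    apply Finset.prod_primes_dvd
    · intro p hp
      simp only [ht, Finset.mem_filter] at hp
      exact hp.2.1.prime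
    · intro p hp
      simp only [ht, Finset.mem_filter] at hp
      exact hdvd p hp.2.2.2
  have hpow : M ^ t.card ≤ ∏ q ∈ t, q := by
    apply Finset.pow_card_le_prod
    intro q hq
    simp only [ht, Finset.mem_filter] at hq
    omega
  have hle : M ^ t.card ≤ σ ^ n :=
    le_trans (hpow.trans (Nat.le_of_dvd (Nat.pos_of_ne_zero hD0) hprod_dvd))
      (le_of_lt hDlt)
  exact (Nat.le_log_iff_pow_le (by omega) (by positivity)).mpr hle
end

section
/- Hard instance for wildcard pattern matching: fix k ≥ 1 and work over the alphabet {0,1} with wildcard symbol ?. Let T be the text 1^k 0 1^k 0 (k ones, a zero, k ones, a zero). For a tuple a = (a_1,…,a_k) with each a_j ∈ {1, ?} and an integer 1 ≤ i ≤ k, let P_{a,i} be the pattern a_1 a_2 … a_k 1^i 0. Then P_{a,i} wildcard-matches T at some position if and only if a_i = ?. -/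
lemma Tget (k j : ℕ) :
    (List.replicate k true ++ [false] ++ List.replicate k true ++ [false])[j]? =
    if j < k then some true else if j = k then some false
    else if j < 2*k+1 then some true else if j = 2*k+1 then some false else none := by
  simp only [List.getElem?_append, List.getElem?_replicate, List.length_append,
    List.length_replicate, List.length_cons, List.length_nil, List.getElem?_cons,
    List.getElem?_nil]
  split_ifs <;> first | rfl | omega

lemma Pget (k i j : ℕ) (a : List (Option Bool)) (ha : a.length = k) :
    (a ++ List.replicate i (some true) ++ [some false])[j]? =
    if j < k then a[j]? else if j < k+i then some (some true)
    else if j = k+i then some (some false) else none := by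
  simp only [List.getElem?_append, List.getElem?_replicate, List.length_append,
    List.length_replicate, ha, List.getElem?_cons, List.getElem?_nil]
  split_ifs <;> first | rfl | omega



/-- A pattern `P` over `Σ ∪ {?}` (wildcard `?` modeled as `none`)
wildcard-matches the text `T` at 0-indexed position `p`: `p + |P| ≤ |T|` and
every non-wildcard pattern character equals the corresponding text character. -/
def wildcardMatchAt {α : Type*} (T : List α) (P : List (Option α)) (p : ℕ) : Prop :=
  p + P.length ≤ T.length ∧
    ∀ j < P.length, ∀ a : α, P[j]? = some (some a) → T[p + j]? = some a

/-- Hard instance for wildcard pattern matching over the alphabet `{0,1}`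
(modeled as `Bool`, with `true` for `1` and `false` for `0`): with text
`T = 1^k 0 1^k 0` and pattern `P_{a,i} = a_1 … a_k 1^i 0` where each
`a_j ∈ {1, ?}` and `1 ≤ i ≤ k`, the pattern `P_{a,i}` wildcard-matches `T`
at some position if and only if `a_i = ?`. -/
theorem wildcard_hard_instance (k : ℕ) (hk : 1 ≤ k)
    (a : List (Option Bool)) (ha : a.length = k)
    (ha' : ∀ x ∈ a, x = some true ∨ x = none)
    (i : ℕ) (hi1 : 1 ≤ i) (hik : i ≤ k) :
    (∃ p : ℕ, wildcardMatchAt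
        (List.replicate k true ++ [false] ++ List.replicate k true ++ [false])
        (a ++ List.replicate i (some true) ++ [some false]) p)
      ↔ a[i - 1]? = some none := by 
  have hTlen : (List.replicate k true ++ [false] ++ List.replicate k true ++ [false]).length
      = 2*k+2 := by simp; omega
  have hPlen : (a ++ List.replicate i (some true) ++ [some false]).length = k+i+1 := by
    simp [ha]; omega
  obtain ⟨x, hx⟩ : ∃ x, a[i-1]? = some x := by
    refine ⟨a[i-1]'(by omega), List.getElem?_eq_getElem _⟩
  have hxmem : x ∈ a := List.mem_of_getElem? hx
  constructor
  · rintro ⟨p, hlen, hmatch⟩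
    rw [hTlen, hPlen] at hlen
    -- last character forces p = k+1-i
    have hlast := hmatch (k+i) (by omega) false
    rw [Pget k i _ a ha] at hlast
    simp only [if_neg (by omega : ¬ k+i < k), if_neg (by omega : ¬ k+i < k+i),
      if_pos rfl] at hlast
    have hlast := hlast rfl
    rw [Tget] at hlast
    have hp : p = k+1-i := by
      by_contra h
      split_ifs at hlast <;> simp_all <;> omega
    subst hp
    -- look at position i-1
    have hmid := hmatch (i-1) (by omega) true
    rw [Pget k i _ a ha, if_pos (by omega : i-1 < k), hx] at hmid
    rcases ha' x hxmem with rfl | rfl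
    · exfalso
      have := hmid rfl
      rw [Tget] at this
      have he : k+1-i+(i-1) = k := by omega
      rw [he] at this
      simp at this
    · exact hx
  · intro hanone
    rw [hx] at hanone
    obtain rfl : x = none := by injection hanone
    refine ⟨k+1-i, by rw [hTlen, hPlen]; omega, ?_⟩
    intro j hj b hb
    rw [hPlen] at hj
    rw [Pget k i _ a ha] at hb
    rw [Tget]
    by_cases hj1 : j < k
    · rw [if_pos hj1] at hb
      obtain ⟨y, hy⟩ : ∃ y, a[j]? = some y := ⟨a[j]'(by omega), List.getElem?_eq_getElem _⟩
      rw [hy] at hb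
      obtain rfl : y = some b := by injection hb
      rcases ha' _ (List.mem_of_getElem? hy) with hyt | hyt
      · obtain rfl : b = true := by injection hyt
        have hne : j ≠ i - 1 := by
          rintro rfl; rw [hy] at hx; simp at hx
        split_ifs <;> first | rfl | omega
      · simp at hyt
    · rw [if_neg hj1] at hb
      by_cases hj2 : j < k+i
      · rw [if_pos hj2] at hb
        obtain rfl : true = b := by injection hb with h; injection h
        split_ifs <;> first | rfl | omega
      · rw [if_neg hj2, if_pos (by omega : j = k+i)] at hb
        obtain rfl : false = b := by injection hb with h; injection h
        obtain rfl : j = k+i := by omega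
        split_ifs <;> first | rfl | omega
end

section
/- Fooling-set property for wildcard pattern matching: fix k ≥ 1, let T be the text 1^k 0 1^k 0 over {0,1}, and for a ∈ {1, ?}^k and 1 ≤ i ≤ k let P_{a,i} be the pattern a_1 … a_k 1^i 0. For any two distinct tuples a ≠ a' in {1, ?}^k there exists an index i with 1 ≤ i ≤ k such that exactly one of the two patterns P_{a,i} and P_{a',i} wildcard-matches T at some position. Hence the map sending a ∈ {1,?}^k to the function i ↦ (P_{a,i} wildcard-matches T at some position) is injective, giving 2^k distinct such functions. -/
section Aux

private lemma Tget_true (k m : ℕ) (h1 : m < 2*k+1) (h2 : m ≠ k) :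
    (List.replicate k true ++ [false] ++ List.replicate k true ++ [false])[m]? = some true := by
  rcases lt_or_gt_of_ne h2 with h | h
  · rw [List.getElem?_append_left (show m < (List.replicate k true ++ [false] ++ List.replicate k true).length by simp; omega),
      List.getElem?_append_left (show m < (List.replicate k true ++ [false]).length by simp; omega),
      List.getElem?_append_left (show m < (List.replicate k true).length by simp; omega),
      List.getElem?_replicate, if_pos h]
  · rw [List.getElem?_append_left (show m < (List.replicate k true ++ [false] ++ List.replicate k true).length by simp; omega),
      List.getElem?_append_right (show (List.replicate k true ++ [false]).length ≤ m by simp; omega),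
      List.getElem?_replicate, if_pos (by simp; omega)]

private lemma Tget_k (k : ℕ) :
    (List.replicate k true ++ [false] ++ List.replicate k true ++ [false])[k]? = some false := by
  rw [List.getElem?_append_left (show k < (List.replicate k true ++ [false] ++ List.replicate k true).length by simp),
    List.getElem?_append_left (show k < (List.replicate k true ++ [false]).length by simp),
    List.getElem?_append_right (show (List.replicate k true).length ≤ k by simp)]
  simp

private lemma Tget_last (k : ℕ) :
    (List.replicate k true ++ [false] ++ List.replicate k true ++ [false])[2*k+1]? = some false := by
  have hL : (List.replicate k true ++ [false] ++ List.replicate k true).length = 2*k+1 := by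
    simp; omega
  rw [← hL]
  exact List.getElem?_concat_length

private lemma Tget_false (k m : ℕ) (hm : m < 2*k+2)
    (h : (List.replicate k true ++ [false] ++ List.replicate k true ++ [false])[m]? = some false) :
    m = k ∨ m = 2*k+1 := by
  by_contra hc
  push_neg at hc
  rw [Tget_true k m (by omega) hc.1] at h
  simp at h

private lemma match_iff (k i : ℕ) (hi1 : 1 ≤ i) (hik : i ≤ k)
    (a : List (Option Bool)) (ha : a.length = k)
    (hae : ∀ x ∈ a, x = some true ∨ x = none) :
    (∃ p : ℕ, wildcardMatchAt
        (List.replicate k true ++ [false] ++ List.replicate k true ++ [false])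
        (a ++ List.replicate i (some true) ++ [some false]) p)
      ↔ a[i-1]? = some none := by
  have Tlen : (List.replicate k true ++ [false] ++ List.replicate k true ++ [false]).length
      = 2*k+2 := by simp; omega
  have Plen : (a ++ List.replicate i (some true) ++ [some false]).length = k + i + 1 := by
    simp [ha]; omega
  have hidx : i - 1 < a.length := by rw [ha]; omega
  have Plast : (a ++ List.replicate i (some true) ++ [some false])[k+i]? = some (some false) := by
    have hL : (a ++ List.replicate i (some true)).length = k + i := by simp [ha]
    rw [← hL]
    exact List.getElem?_concat_length
  have Pa : ∀ j < k, (a ++ List.replicate i (some true) ++ [some false])[j]? = a[j]? := by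
    intro j hj
    rw [List.getElem?_append_left (show j < (a ++ List.replicate i (some true)).length by simp [ha]; omega),
      List.getElem?_append_left (show j < a.length by rw [ha]; exact hj)]
  have Pmid : ∀ j, k ≤ j → j < k + i →
      (a ++ List.replicate i (some true) ++ [some false])[j]? = some (some true) := by
    intro j h1 h2
    rw [List.getElem?_append_left (show j < (a ++ List.replicate i (some true)).length by simp [ha]; omega),
      List.getElem?_append_right (show a.length ≤ j by rw [ha]; exact h1),
      List.getElem?_replicate, if_pos (by rw [ha]; omega)]
  constructor
  · rintro ⟨p, h1, h2⟩
    rw [Plen, Tlen] at h1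
    have hlast := h2 (k+i) (by omega) false Plast
    have := Tget_false k (p + (k+i)) (by omega) hlast
    have hp : p + i = k + 1 := by omega
    rcases hae a[i-1] (List.getElem_mem hidx) with hv | hv
    · exfalso
      have h3 := h2 (i-1) (by omega) true
        (by rw [Pa (i-1) (by omega), List.getElem?_eq_getElem hidx, hv])
      have he : p + (i-1) = k := by omega
      rw [he, Tget_k] at h3
      simp at h3
    · rw [List.getElem?_eq_getElem hidx, hv]
  · intro h
    have hv : a[i-1] = none := by
      rw [List.getElem?_eq_getElem hidx] at h
      exact Option.some_injective _ h
    refine ⟨k + 1 - i, ?_, ?_⟩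
    · rw [Plen, Tlen]; omega
    · intro j hj a0 hPj
      rw [Plen] at hj
      rcases lt_or_ge j k with hjk | hjk
      · rw [Pa j hjk] at hPj
        have hj' : j < a.length := by rw [ha]; exact hjk
        rw [List.getElem?_eq_getElem hj'] at hPj
        rcases hae a[j] (List.getElem_mem hj') with hv' | hv'
        · rw [hv'] at hPj
          have ha0 : a0 = true := by simpa using hPj.symm
          have hne : j ≠ i - 1 := by
            intro hE
            have h' := h
            rw [← hE, List.getElem?_eq_getElem hj', hv'] at h'
            simp at h'
          rw [ha0, Tget_true k _ (by omega) (by omega)]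
        · rw [hv'] at hPj; simp at hPj
      · rcases lt_or_ge j (k+i) with hji | hji
        · rw [Pmid j hjk hji] at hPj
          have ha0 : a0 = true := by simpa using hPj.symm
          rw [ha0, Tget_true k _ (by omega) (by omega)]
        · have hje : j = k + i := by omega
          rw [hje, Plast] at hPj
          have ha0 : a0 = false := by simpa using hPj.symm
          have he : k + 1 - i + (k + i) = 2*k+1 := by omega
          rw [hje, he, ha0, Tget_last]

end Aux

/-- Fooling-set property for wildcard pattern matching, over the alphabet
`{0,1}` (modeled as `Bool`, `true` for `1`, `false` for `0`): with text
`T = 1^k 0 1^k 0` and patterns `P_{a,i} = a_1 … a_k 1^i 0`, for any two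
distinct tuples `a ≠ a'` in `{1, ?}^k` there is an index `1 ≤ i ≤ k` such
that exactly one of `P_{a,i}` and `P_{a',i}` wildcard-matches `T` at some
position; hence the map `a ↦ (i ↦ (P_{a,i} matches T))` is injective, giving
`2^k` distinct such functions. -/
theorem wildcard_fooling_set (k : ℕ) (hk : 1 ≤ k)
    (a a' : List (Option Bool)) (ha : a.length = k) (ha'len : a'.length = k)
    (hae : ∀ x ∈ a, x = some true ∨ x = none)
    (ha'e : ∀ x ∈ a', x = some true ∨ x = none)
    (hne : a ≠ a') :
    ∃ i : ℕ, 1 ≤ i ∧ i ≤ k ∧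
      Xor'
        (∃ p : ℕ, wildcardMatchAt
          (List.replicate k true ++ [false] ++ List.replicate k true ++ [false])
          (a ++ List.replicate i (some true) ++ [some false]) p)
        (∃ p : ℕ, wildcardMatchAt
          (List.replicate k true ++ [false] ++ List.replicate k true ++ [false])
          (a' ++ List.replicate i (some true) ++ [some false]) p) := by
  have hdiff : ∃ j < k, a[j]? ≠ a'[j]? := by
    by_contra h
    push_neg at h
    apply hne
    apply List.ext_getElem?
    intro n
    rcases lt_or_ge n k with hn | hn
    · exact h n hn
    · rw [List.getElem?_eq_none (by omega), List.getElem?_eq_none (by omega)]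
  obtain ⟨j, hjk, hjne⟩ := hdiff
  have hja : j < a.length := by rw [ha]; exact hjk
  have hja' : j < a'.length := by rw [ha'len]; exact hjk
  refine ⟨j + 1, by omega, by omega, ?_⟩
  rw [match_iff k (j+1) (by omega) (by omega) a ha hae,
    match_iff k (j+1) (by omega) (by omega) a' ha'len ha'e]
  simp only [Nat.add_sub_cancel]
  rw [List.getElem?_eq_getElem hja, List.getElem?_eq_getElem hja'] at hjne ⊢
  rcases hae a[j] (List.getElem_mem hja) with h1 | h1 <;>
    rcases ha'e a'[j] (List.getElem_mem hja') with h2 | h2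
  · exact absurd (by rw [h1, h2]) hjne
  · exact Or.inr ⟨by rw [h2], by rw [h1]; simp⟩
  · exact Or.inl ⟨by rw [h1], by rw [h2]; simp⟩
  · exact absurd (by rw [h1, h2]) hjne
end
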